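/- Let M be a Malcev algebra over F containing elements E, H, F with EH = E, FH = −F, EF = (1/2)H, and let u_i, v_i, u_j, v_j ∈ M satisfy, for k ∈ {i,j}: u_kH = u_k, v_kH = −v_k, u_kE = v_k, u_kF = 0, v_kE = 0, v_kF = −u_k. Then the following relations hold: (u_iu_j)E = −u_iv_j, (u_iv_j)E = −(1/2)v_iv_j, (v_iv_j)E = 0, (u_iu_j)F = 0, (u_iv_j)F = (1/2)u_iu_j, (v_iv_j)F = u_iv_j, (u_iu_j)H = −u_iu_j, (u_iv_j)H = 0, (v_iv_j)H = v_iv_j, and u_iv_j = v_iu_j. In particular, if u_j = u_i and v_j = v_i then u_iv_i = 0. -/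

import Mathlib

section
variable {K : Type*} [Field K] {M : Type*} [AddCommGroup M] [Module K M]

/-- the Jacobian `J(x,y,z) = (xy)z + (yz)x + (zx)y` -/
def mjac (μ : M →ₗ[K] M →ₗ[K] M) (x y z : M) : M :=
  μ (μ x y) z + μ (μ y z) x + μ (μ z x) y

/-- `{x,y,z} = (xy)z − (xz)y + 2·x(yz)` -/
def mbr (μ : M →ₗ[K] M →ₗ[K] M) (x y z : M) : M :=
  μ (μ x y) z - μ (μ x z) y + (2 : K) • μ x (μ y z)

/-- `h(y,z,t,x,u) = {yz,t,u}x + {yz,t,x}u + {yx,z,u}t + {yu,z,x}t` -/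
def mh (μ : M →ₗ[K] M →ₗ[K] M) (y z t x u : M) : M :=
  μ (mbr μ (μ y z) t u) x + μ (mbr μ (μ y z) t x) u +
    μ (mbr μ (μ y x) z u) t + μ (mbr μ (μ y u) z x) t

/-- A Malcev algebra structure: anticommutative (`x·x = 0`) together with the Malcev
identity `(xz)(yt) = ((xy)z)t + ((yz)t)x + ((zt)x)y + ((tx)y)z`. -/
def IsMalcev (μ : M →ₗ[K] M →ₗ[K] M) : Prop :=
  (∀ x, μ x x = 0) ∧
    ∀ x y z t, μ (μ x z) (μ y t) =
      μ (μ (μ x y) z) t + μ (μ (μ y z) t) x + μ (μ (μ z t) x) y + μ (μ (μ t x) y) z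

/-- the variety 𝓗 : `h(y,z,t,x,u) = 0` identically -/
def InVarietyH (μ : M →ₗ[K] M →ₗ[K] M) : Prop := ∀ y z t x u, mh μ y z t x u = 0

/-- `N_M = {m | J(m,a,b) = 0 ∀ a,b ∈ L}` -/
def NMset (μ : M →ₗ[K] M →ₗ[K] M) (L : Submodule K M) : Set M :=
  {m : M | ∀ a ∈ L, ∀ b ∈ L, mjac μ m a b = 0}

/-- `J_M = {m | {m,a,b} = 0 ∀ a,b ∈ L}` -/
def JMset (μ : M →ₗ[K] M →ₗ[K] M) (L : Submodule K M) : Set M :=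
  {m : M | ∀ a ∈ L, ∀ b ∈ L, mbr μ m a b = 0}

/-- Multiplication relations between two 2-dimensional non-Lie
Malcev `sl₂`-modules inside a Malcev algebra. -/
theorem stmt3
    (h2 : (2 : K) ≠ 0) (h3 : (3 : K) ≠ 0)
    (μ : M →ₗ[K] M →ₗ[K] M) (hMal : IsMalcev μ)
    (E H F : M)
    (hEH : μ E H = E) (hFH : μ F H = -F) (hEF : μ E F = (2⁻¹ : K) • H)
    (ui vi uj vj : M)
    (hiH : μ ui H = ui) (hiH' : μ vi H = -vi) (hiE : μ ui E = vi)
    (hiF : μ ui F = 0) (hiE' : μ vi E = 0) (hiF' : μ vi F = -ui)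
    (hjH : μ uj H = uj) (hjH' : μ vj H = -vj) (hjE : μ uj E = vj)
    (hjF : μ uj F = 0) (hjE' : μ vj E = 0) (hjF' : μ vj F = -uj) :
    μ (μ ui uj) E = -(μ ui vj) ∧
    μ (μ ui vj) E = -((2⁻¹ : K) • μ vi vj) ∧
    μ (μ vi vj) E = 0 ∧
    μ (μ ui uj) F = 0 ∧
    μ (μ ui vj) F = (2⁻¹ : K) • μ ui uj ∧
    μ (μ vi vj) F = μ ui vj ∧
    μ (μ ui uj) H = -(μ ui uj) ∧
    μ (μ ui vj) H = 0 ∧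
    μ (μ vi vj) H = μ vi vj ∧
    μ ui vj = μ vi uj ∧
    (uj = ui → vj = vi → μ ui vi = 0) := by
  have h6 : (6 : K) ≠ 0 := by
    have : (6 : K) = 2 * 3 := by norm_num
    rw [this]; exact mul_ne_zero h2 h3
  obtain ⟨halt, hmal⟩ := hMal
  have skw : ∀ x y : M, μ x y = -μ y x := by
    intro x y
    have h := halt (x + y)
    simp only [map_add, LinearMap.add_apply, halt x, halt y, zero_add, add_zero] at h
    exact eq_neg_of_add_eq_zero_right h
  have hHE : μ H E = -E := by rw [skw, hEH]
  have hHF : μ H F = F := by rw [skw, hFH, neg_neg]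
  have hFE : μ F E = -((2⁻¹ : K) • H) := by rw [skw, hEF]
  have hEui : μ E ui = -vi := by rw [skw, hiE]
  have hHui : μ H ui = -ui := by rw [skw, hiH]
  have hFui : μ F ui = 0 := by rw [skw, hiF, neg_zero]
  have hEvi : μ E vi = 0 := by rw [skw, hiE', neg_zero]
  have hHvi : μ H vi = vi := by rw [skw, hiH', neg_neg]
  have hFvi : μ F vi = ui := by rw [skw, hiF', neg_neg]
  have hEuj : μ E uj = -vj := by rw [skw, hjE]
  have hHuj : μ H uj = -uj := by rw [skw, hjH]
  have hFuj : μ F uj = 0 := by rw [skw, hjF, neg_zero]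
  have hEvj : μ E vj = 0 := by rw [skw, hjE', neg_zero]
  have hHvj : μ H vj = vj := by rw [skw, hjH', neg_neg]
  have hFvj : μ F vj = uj := by rw [skw, hjF', neg_neg]
  have zE := halt E
  have zH := halt H
  have zF := halt F
  have rP : μ uj ui = -(μ ui uj) := skw uj ui
  have rQ : μ vj ui = -(μ ui vj) := skw vj ui
  have rR : μ uj vi = -(μ vi uj) := skw uj vi
  have rS : μ vj vi = -(μ vi vj) := skw vj vi
  have lPE : μ E (μ ui uj) = -(μ (μ ui uj) E) := skw E _
  have lPH : μ H (μ ui uj) = -(μ (μ ui uj) H) := skw H _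
  have lPF : μ F (μ ui uj) = -(μ (μ ui uj) F) := skw F _
  have lQE : μ E (μ ui vj) = -(μ (μ ui vj) E) := skw E _
  have lQH : μ H (μ ui vj) = -(μ (μ ui vj) H) := skw H _
  have lQF : μ F (μ ui vj) = -(μ (μ ui vj) F) := skw F _
  have lRE : μ E (μ vi uj) = -(μ (μ vi uj) E) := skw E _
  have lRH : μ H (μ vi uj) = -(μ (μ vi uj) H) := skw H _
  have lRF : μ F (μ vi uj) = -(μ (μ vi uj) F) := skw F _
  have lSE : μ E (μ vi vj) = -(μ (μ vi vj) E) := skw E _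
  have lSH : μ H (μ vi vj) = -(μ (μ vi vj) H) := skw H _
  have lSF : μ F (μ vi vj) = -(μ (μ vi vj) F) := skw F _
  have A1 := hmal E H ui uj
  simp only [hEH, hFH, hEF, hiH, hiH', hiE, hiF, hiE', hiF', hjH, hjH', hjE, hjF, hjE', hjF', hHE, hHF, hFE, hEui, hHui, hFui, hEvi, hHvi, hFvi, hEuj, hHuj, hFuj, hEvj, hHvj, hFvj, zE, zH, zF, rP, rQ, rR, rS, lPE, lPH, lPF, lQE, lQH, lQF, lRE, lRH, lRF, lSE, lSH, lSF, map_add, map_neg, map_smul, map_zero, LinearMap.add_apply, LinearMap.neg_apply, LinearMap.smul_apply, LinearMap.zero_apply, neg_neg, neg_zero, smul_neg, smul_zero, zero_add, add_zero] at A1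
  have A2 := hmal E H uj ui
  simp only [hEH, hFH, hEF, hiH, hiH', hiE, hiF, hiE', hiF', hjH, hjH', hjE, hjF, hjE', hjF', hHE, hHF, hFE, hEui, hHui, hFui, hEvi, hHvi, hFvi, hEuj, hHuj, hFuj, hEvj, hHvj, hFvj, zE, zH, zF, rP, rQ, rR, rS, lPE, lPH, lPF, lQE, lQH, lQF, lRE, lRH, lRF, lSE, lSH, lSF, map_add, map_neg, map_smul, map_zero, LinearMap.add_apply, LinearMap.neg_apply, LinearMap.smul_apply, LinearMap.zero_apply, neg_neg, neg_zero, smul_neg, smul_zero, zero_add, add_zero] at A2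
  have A3 := hmal E F vi uj
  simp only [hEH, hFH, hEF, hiH, hiH', hiE, hiF, hiE', hiF', hjH, hjH', hjE, hjF, hjE', hjF', hHE, hHF, hFE, hEui, hHui, hFui, hEvi, hHvi, hFvi, hEuj, hHuj, hFuj, hEvj, hHvj, hFvj, zE, zH, zF, rP, rQ, rR, rS, lPE, lPH, lPF, lQE, lQH, lQF, lRE, lRH, lRF, lSE, lSH, lSF, map_add, map_neg, map_smul, map_zero, LinearMap.add_apply, LinearMap.neg_apply, LinearMap.smul_apply, LinearMap.zero_apply, neg_neg, neg_zero, smul_neg, smul_zero, zero_add, add_zero] at A3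
  have A4 := hmal E F uj vi
  simp only [hEH, hFH, hEF, hiH, hiH', hiE, hiF, hiE', hiF', hjH, hjH', hjE, hjF, hjE', hjF', hHE, hHF, hFE, hEui, hHui, hFui, hEvi, hHvi, hFvi, hEuj, hHuj, hFuj, hEvj, hHvj, hFvj, zE, zH, zF, rP, rQ, rR, rS, lPE, lPH, lPF, lQE, lQH, lQF, lRE, lRH, lRF, lSE, lSH, lSF, map_add, map_neg, map_smul, map_zero, LinearMap.add_apply, LinearMap.neg_apply, LinearMap.smul_apply, LinearMap.zero_apply, neg_neg, neg_zero, smul_neg, smul_zero, zero_add, add_zero] at A4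
  have A5 := hmal E E ui uj
  simp only [hEH, hFH, hEF, hiH, hiH', hiE, hiF, hiE', hiF', hjH, hjH', hjE, hjF, hjE', hjF', hHE, hHF, hFE, hEui, hHui, hFui, hEvi, hHvi, hFvi, hEuj, hHuj, hFuj, hEvj, hHvj, hFvj, zE, zH, zF, rP, rQ, rR, rS, lPE, lPH, lPF, lQE, lQH, lQF, lRE, lRH, lRF, lSE, lSH, lSF, map_add, map_neg, map_smul, map_zero, LinearMap.add_apply, LinearMap.neg_apply, LinearMap.smul_apply, LinearMap.zero_apply, neg_neg, neg_zero, smul_neg, smul_zero, zero_add, add_zero] at A5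
  have A6 := hmal E E uj ui
  simp only [hEH, hFH, hEF, hiH, hiH', hiE, hiF, hiE', hiF', hjH, hjH', hjE, hjF, hjE', hjF', hHE, hHF, hFE, hEui, hHui, hFui, hEvi, hHvi, hFvi, hEuj, hHuj, hFuj, hEvj, hHvj, hFvj, zE, zH, zF, rP, rQ, rR, rS, lPE, lPH, lPF, lQE, lQH, lQF, lRE, lRH, lRF, lSE, lSH, lSF, map_add, map_neg, map_smul, map_zero, LinearMap.add_apply, LinearMap.neg_apply, LinearMap.smul_apply, LinearMap.zero_apply, neg_neg, neg_zero, smul_neg, smul_zero, zero_add, add_zero] at A6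
  have A7 := hmal E H vi uj
  simp only [hEH, hFH, hEF, hiH, hiH', hiE, hiF, hiE', hiF', hjH, hjH', hjE, hjF, hjE', hjF', hHE, hHF, hFE, hEui, hHui, hFui, hEvi, hHvi, hFvi, hEuj, hHuj, hFuj, hEvj, hHvj, hFvj, zE, zH, zF, rP, rQ, rR, rS, lPE, lPH, lPF, lQE, lQH, lQF, lRE, lRH, lRF, lSE, lSH, lSF, map_add, map_neg, map_smul, map_zero, LinearMap.add_apply, LinearMap.neg_apply, LinearMap.smul_apply, LinearMap.zero_apply, neg_neg, neg_zero, smul_neg, smul_zero, zero_add, add_zero] at A7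
  have A8 := hmal E H uj vi
  simp only [hEH, hFH, hEF, hiH, hiH', hiE, hiF, hiE', hiF', hjH, hjH', hjE, hjF, hjE', hjF', hHE, hHF, hFE, hEui, hHui, hFui, hEvi, hHvi, hFvi, hEuj, hHuj, hFuj, hEvj, hHvj, hFvj, zE, zH, zF, rP, rQ, rR, rS, lPE, lPH, lPF, lQE, lQH, lQF, lRE, lRH, lRF, lSE, lSH, lSF, map_add, map_neg, map_smul, map_zero, LinearMap.add_apply, LinearMap.neg_apply, LinearMap.smul_apply, LinearMap.zero_apply, neg_neg, neg_zero, smul_neg, smul_zero, zero_add, add_zero] at A8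
  have A9 := hmal E E vi uj
  simp only [hEH, hFH, hEF, hiH, hiH', hiE, hiF, hiE', hiF', hjH, hjH', hjE, hjF, hjE', hjF', hHE, hHF, hFE, hEui, hHui, hFui, hEvi, hHvi, hFvi, hEuj, hHuj, hFuj, hEvj, hHvj, hFvj, zE, zH, zF, rP, rQ, rR, rS, lPE, lPH, lPF, lQE, lQH, lQF, lRE, lRH, lRF, lSE, lSH, lSF, map_add, map_neg, map_smul, map_zero, LinearMap.add_apply, LinearMap.neg_apply, LinearMap.smul_apply, LinearMap.zero_apply, neg_neg, neg_zero, smul_neg, smul_zero, zero_add, add_zero] at A9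
  have A10 := hmal E E uj vi
  simp only [hEH, hFH, hEF, hiH, hiH', hiE, hiF, hiE', hiF', hjH, hjH', hjE, hjF, hjE', hjF', hHE, hHF, hFE, hEui, hHui, hFui, hEvi, hHvi, hFvi, hEuj, hHuj, hFuj, hEvj, hHvj, hFvj, zE, zH, zF, rP, rQ, rR, rS, lPE, lPH, lPF, lQE, lQH, lQF, lRE, lRH, lRF, lSE, lSH, lSF, map_add, map_neg, map_smul, map_zero, LinearMap.add_apply, LinearMap.neg_apply, LinearMap.smul_apply, LinearMap.zero_apply, neg_neg, neg_zero, smul_neg, smul_zero, zero_add, add_zero] at A10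
  have A11 := hmal F F vi uj
  simp only [hEH, hFH, hEF, hiH, hiH', hiE, hiF, hiE', hiF', hjH, hjH', hjE, hjF, hjE', hjF', hHE, hHF, hFE, hEui, hHui, hFui, hEvi, hHvi, hFvi, hEuj, hHuj, hFuj, hEvj, hHvj, hFvj, zE, zH, zF, rP, rQ, rR, rS, lPE, lPH, lPF, lQE, lQH, lQF, lRE, lRH, lRF, lSE, lSH, lSF, map_add, map_neg, map_smul, map_zero, LinearMap.add_apply, LinearMap.neg_apply, LinearMap.smul_apply, LinearMap.zero_apply, neg_neg, neg_zero, smul_neg, smul_zero, zero_add, add_zero] at A11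
  have A12 := hmal F F uj vi
  simp only [hEH, hFH, hEF, hiH, hiH', hiE, hiF, hiE', hiF', hjH, hjH', hjE, hjF, hjE', hjF', hHE, hHF, hFE, hEui, hHui, hFui, hEvi, hHvi, hFvi, hEuj, hHuj, hFuj, hEvj, hHvj, hFvj, zE, zH, zF, rP, rQ, rR, rS, lPE, lPH, lPF, lQE, lQH, lQF, lRE, lRH, lRF, lSE, lSH, lSF, map_add, map_neg, map_smul, map_zero, LinearMap.add_apply, LinearMap.neg_apply, LinearMap.smul_apply, LinearMap.zero_apply, neg_neg, neg_zero, smul_neg, smul_zero, zero_add, add_zero] at A12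
  have A13 := hmal E ui F uj
  simp only [hEH, hFH, hEF, hiH, hiH', hiE, hiF, hiE', hiF', hjH, hjH', hjE, hjF, hjE', hjF', hHE, hHF, hFE, hEui, hHui, hFui, hEvi, hHvi, hFvi, hEuj, hHuj, hFuj, hEvj, hHvj, hFvj, zE, zH, zF, rP, rQ, rR, rS, lPE, lPH, lPF, lQE, lQH, lQF, lRE, lRH, lRF, lSE, lSH, lSF, map_add, map_neg, map_smul, map_zero, LinearMap.add_apply, LinearMap.neg_apply, LinearMap.smul_apply, LinearMap.zero_apply, neg_neg, neg_zero, smul_neg, smul_zero, zero_add, add_zero] at A13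
  have A14 := hmal H F vi uj
  simp only [hEH, hFH, hEF, hiH, hiH', hiE, hiF, hiE', hiF', hjH, hjH', hjE, hjF, hjE', hjF', hHE, hHF, hFE, hEui, hHui, hFui, hEvi, hHvi, hFvi, hEuj, hHuj, hFuj, hEvj, hHvj, hFvj, zE, zH, zF, rP, rQ, rR, rS, lPE, lPH, lPF, lQE, lQH, lQF, lRE, lRH, lRF, lSE, lSH, lSF, map_add, map_neg, map_smul, map_zero, LinearMap.add_apply, LinearMap.neg_apply, LinearMap.smul_apply, LinearMap.zero_apply, neg_neg, neg_zero, smul_neg, smul_zero, zero_add, add_zero] at A14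
  have A15 := hmal H F uj vi
  simp only [hEH, hFH, hEF, hiH, hiH', hiE, hiF, hiE', hiF', hjH, hjH', hjE, hjF, hjE', hjF', hHE, hHF, hFE, hEui, hHui, hFui, hEvi, hHvi, hFvi, hEuj, hHuj, hFuj, hEvj, hHvj, hFvj, zE, zH, zF, rP, rQ, rR, rS, lPE, lPH, lPF, lQE, lQH, lQF, lRE, lRH, lRF, lSE, lSH, lSF, map_add, map_neg, map_smul, map_zero, LinearMap.add_apply, LinearMap.neg_apply, LinearMap.smul_apply, LinearMap.zero_apply, neg_neg, neg_zero, smul_neg, smul_zero, zero_add, add_zero] at A15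
  have A16 := hmal E vi F uj
  simp only [hEH, hFH, hEF, hiH, hiH', hiE, hiF, hiE', hiF', hjH, hjH', hjE, hjF, hjE', hjF', hHE, hHF, hFE, hEui, hHui, hFui, hEvi, hHvi, hFvi, hEuj, hHuj, hFuj, hEvj, hHvj, hFvj, zE, zH, zF, rP, rQ, rR, rS, lPE, lPH, lPF, lQE, lQH, lQF, lRE, lRH, lRF, lSE, lSH, lSF, map_add, map_neg, map_smul, map_zero, LinearMap.add_apply, LinearMap.neg_apply, LinearMap.smul_apply, LinearMap.zero_apply, neg_neg, neg_zero, smul_neg, smul_zero, zero_add, add_zero] at A16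
  have A17 := hmal E uj H ui
  simp only [hEH, hFH, hEF, hiH, hiH', hiE, hiF, hiE', hiF', hjH, hjH', hjE, hjF, hjE', hjF', hHE, hHF, hFE, hEui, hHui, hFui, hEvi, hHvi, hFvi, hEuj, hHuj, hFuj, hEvj, hHvj, hFvj, zE, zH, zF, rP, rQ, rR, rS, lPE, lPH, lPF, lQE, lQH, lQF, lRE, lRH, lRF, lSE, lSH, lSF, map_add, map_neg, map_smul, map_zero, LinearMap.add_apply, LinearMap.neg_apply, LinearMap.smul_apply, LinearMap.zero_apply, neg_neg, neg_zero, smul_neg, smul_zero, zero_add, add_zero] at A17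
  have A18 := hmal E ui H uj
  simp only [hEH, hFH, hEF, hiH, hiH', hiE, hiF, hiE', hiF', hjH, hjH', hjE, hjF, hjE', hjF', hHE, hHF, hFE, hEui, hHui, hFui, hEvi, hHvi, hFvi, hEuj, hHuj, hFuj, hEvj, hHvj, hFvj, zE, zH, zF, rP, rQ, rR, rS, lPE, lPH, lPF, lQE, lQH, lQF, lRE, lRH, lRF, lSE, lSH, lSF, map_add, map_neg, map_smul, map_zero, LinearMap.add_apply, LinearMap.neg_apply, LinearMap.smul_apply, LinearMap.zero_apply, neg_neg, neg_zero, smul_neg, smul_zero, zero_add, add_zero] at A18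
  have A19 := hmal E vi H uj
  simp only [hEH, hFH, hEF, hiH, hiH', hiE, hiF, hiE', hiF', hjH, hjH', hjE, hjF, hjE', hjF', hHE, hHF, hFE, hEui, hHui, hFui, hEvi, hHvi, hFvi, hEuj, hHuj, hFuj, hEvj, hHvj, hFvj, zE, zH, zF, rP, rQ, rR, rS, lPE, lPH, lPF, lQE, lQH, lQF, lRE, lRH, lRF, lSE, lSH, lSF, map_add, map_neg, map_smul, map_zero, LinearMap.add_apply, LinearMap.neg_apply, LinearMap.smul_apply, LinearMap.zero_apply, neg_neg, neg_zero, smul_neg, smul_zero, zero_add, add_zero] at A19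

  have t1 : μ (μ ui uj) E = -(μ ui vj) := by
    linear_combination (norm := (match_scalars <;> field_simp <;> ring1)) ((-(2/3) : K)) • A1 + ((-(2/3) : K)) • A2 + ((-1 : K)) • A3 + ((-1 : K)) • A4
  have t2 : μ (μ ui vj) E = -((2⁻¹ : K) • μ vi vj) := by
    linear_combination (norm := (match_scalars <;> field_simp <;> ring1)) ((-1 : K)) • A5 + ((-1 : K)) • A6 + ((-(1/2) : K)) • A7 + ((-(1/2) : K)) • A8
  have t3 : μ (μ vi vj) E = 0 := by
    linear_combination (norm := (match_scalars <;> field_simp <;> ring1)) ((-1 : K)) • A9 + ((-1 : K)) • A10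
  have t4 : μ (μ ui uj) F = 0 := by
    linear_combination (norm := (match_scalars <;> field_simp <;> ring1)) ((-1 : K)) • A11 + ((-1 : K)) • A12
  have t5 : μ (μ ui vj) F = (2⁻¹ : K) • μ ui uj := by
    linear_combination (norm := (match_scalars <;> field_simp <;> ring1)) ((1 : K)) • A13 + ((-(1/2) : K)) • A14 + ((-(1/2) : K)) • A15
  have t6 : μ (μ vi vj) F = μ ui vj := by
    linear_combination (norm := (match_scalars <;> field_simp <;> ring1)) (((1/6) : K)) • A1 + (((1/6) : K)) • A2 + ((1 : K)) • A16 + ((-(1/2) : K)) • A17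
  have t7 : μ (μ ui uj) H = -(μ ui uj) := by
    linear_combination (norm := (match_scalars <;> field_simp <;> ring1)) ((-1 : K)) • A14 + ((-1 : K)) • A15
  have t8 : μ (μ ui vj) H = 0 := by
    linear_combination (norm := (match_scalars <;> field_simp <;> ring1)) ((-1 : K)) • A1 + ((-1 : K)) • A2 + ((-2 : K)) • A3 + ((-2 : K)) • A4 + ((1 : K)) • A18
  have t9 : μ (μ vi vj) H = μ vi vj := by
    linear_combination (norm := (match_scalars <;> field_simp <;> ring1)) ((1 : K)) • A19
  have t10 : μ ui vj = μ vi uj := by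
    linear_combination (norm := (match_scalars <;> field_simp <;> ring1)) ((-(1/3) : K)) • A1 + ((-(1/3) : K)) • A2
  refine ⟨t1, t2, t3, t4, t5, t6, t7, t8, t9, t10, ?_⟩
  intro e1 e2
  rw [e1, e2] at t10
  have h0 : (2 : K) • μ ui vi = 0 := by
    have hx := t10
    rw [skw vi ui] at hx
    rw [two_smul]
    linear_combination (norm := (match_scalars <;> ring1)) hx
  calc μ ui vi = (2⁻¹ : K) • ((2 : K) • μ ui vi) := by
        rw [smul_smul, inv_mul_cancel₀ h2, one_smul]
    _ = 0 := by rw [h0, smul_zero]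


end
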